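/- Product form of strategies given past complete state: for any code on the memoryless FS-MAC with noisy CSIT, any time t and any σ∈𝒮^{t-1} with P(S_{[t-1]}=σ)>0, the conditional law factorizes as P(S_t=s, S_t^a=s^a, S_t^b=s^b, T_t^a=t^a, T_t^b=t^b | S_{[t-1]}=σ) = P_{S,S^a,S^b}(s,s^a,s^b)·π^σ_{T^a}(t^a)·π^σ_{T^b}(t^b); in particular, conditionally on S_{[t-1]}=σ, the pair of Shannon strategies (T_t^a, T_t^b) is independent of the current state triple (S_t,S_t^a,S_t^b), and T_t^a and T_t^b are conditionally independent of each other, with conditional marginals π^σ_{T^a} and π^σ_{T^b}. -/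

import Mathlib

open scoped BigOperators
open Finset

noncomputable section

/-- Shannon entropy (base 2) of a pmf on a finite type (convention `0 * log 0 = 0`). -/
def ent {α : Type} [Fintype α] (p : α → ℝ) : ℝ :=
  -∑ x, p x * Real.logb 2 (p x)

/-- `p` is a probability mass function. -/
def isPMF {α : Type} [Fintype α] (p : α → ℝ) : Prop :=
  (∀ x, 0 ≤ p x) ∧ ∑ x, p x = 1

/-- Mutual information `I(A;B)` computed from a joint pmf on `α × β`. -/
def mutInfo {α β : Type} [Fintype α] [Fintype β] (p : α × β → ℝ) : ℝ :=
  ent (fun a => ∑ b, p (a, b)) + ent (fun b => ∑ a, p (a, b)) - ent p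

/-- Conditional mutual information `I(A;B|C)` computed from a joint pmf on `α × β × γ`. -/
def condMutInfo {α β γ : Type} [Fintype α] [Fintype β] [Fintype γ]
    (p : α × β × γ → ℝ) : ℝ :=
  ent (fun ac : α × γ => ∑ b, p (ac.1, b, ac.2))
    + ent (fun bc : β × γ => ∑ a, p (a, bc.1, bc.2))
    - ent p
    - ent (fun c : γ => ∑ a, ∑ b, p (a, b, c))

/-- A two-user memoryless finite-state MAC with i.i.d. state, noisy causal CSIT
(through the kernels `Qa`, `Qb`) and complete CSIR. -/
structure FSMAC (S Sa Sb Xa Xb Y : Type) [Fintype S] [Fintype Sa] [Fintype Sb]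
    [Fintype Xa] [Fintype Xb] [Fintype Y] : Type where
  PS : S → ℝ
  Qa : S → Sa → ℝ
  Qb : S → Sb → ℝ
  chan : Xa → Xb → S → Y → ℝ
  PS_pmf : isPMF PS
  Qa_pmf : ∀ s, isPMF (Qa s)
  Qb_pmf : ∀ s, isPMF (Qb s)
  chan_pmf : ∀ xa xb s, isPMF (chan xa xb s)

variable {S Sa Sb Xa Xb Y : Type} [Fintype S] [Fintype Sa] [Fintype Sb]
  [Fintype Xa] [Fintype Xb] [Fintype Y] [DecidableEq Sa] [DecidableEq Sb]

/-- `P_{Y|T^a,T^b,S}(y|t^a,t^b,s)`: channel kernel at the level of Shannon strategies. -/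
def stratKernel (M : FSMAC S Sa Sb Xa Xb Y) (ta : Sa → Xa) (tb : Sb → Xb)
    (s : S) (y : Y) : ℝ :=
  ∑ sa, ∑ sb, M.Qa s sa * M.Qb s sb * M.chan (ta sa) (tb sb) s y

/-- Joint single-letter law of `((T^a,T^b),Y,S)` induced by a memoryless stationary
team policy `(πa, πb)`. -/
def teamLaw (M : FSMAC S Sa Sb Xa Xb Y) (πa : (Sa → Xa) → ℝ) (πb : (Sb → Xb) → ℝ) :
    ((Sa → Xa) × (Sb → Xb)) × Y × S → ℝ :=
  fun x => M.PS x.2.2 * πa x.1.1 * πb x.1.2 * stratKernel M x.1.1 x.1.2 x.2.2 x.2.1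

/-- `I(T^a;Y|T^b,S)` under the team policy law. -/
def Ia (M : FSMAC S Sa Sb Xa Xb Y) (πa : (Sa → Xa) → ℝ) (πb : (Sb → Xb) → ℝ) : ℝ :=
  condMutInfo (fun x : (Sa → Xa) × Y × ((Sb → Xb) × S) =>
    teamLaw M πa πb ((x.1, x.2.2.1), x.2.1, x.2.2.2))

/-- `I(T^b;Y|T^a,S)` under the team policy law. -/
def Ib (M : FSMAC S Sa Sb Xa Xb Y) (πa : (Sa → Xa) → ℝ) (πb : (Sb → Xb) → ℝ) : ℝ :=
  condMutInfo (fun x : (Sb → Xb) × Y × ((Sa → Xa) × S) =>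
    teamLaw M πa πb ((x.2.2.1, x.1), x.2.1, x.2.2.2))

/-- `I(T^a,T^b;Y|S)` under the team policy law. -/
def Isum (M : FSMAC S Sa Sb Xa Xb Y) (πa : (Sa → Xa) → ℝ) (πb : (Sb → Xb) → ℝ) : ℝ :=
  condMutInfo (teamLaw M πa πb)

/-- The region `ℛ(π)` of a memoryless stationary team policy `π = (πa, πb)`. -/
def rateRegion (M : FSMAC S Sa Sb Xa Xb Y) (πa : (Sa → Xa) → ℝ)
    (πb : (Sb → Xb) → ℝ) : Set (ℝ × ℝ) :=
  {R : ℝ × ℝ | 0 ≤ R.1 ∧ 0 ≤ R.2 ∧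
    R.1 < Ia M πa πb ∧ R.2 < Ib M πa πb ∧ R.1 + R.2 < Isum M πa πb}

/-- A block code with causal encoders (encoder `a` sees `S^a_{[t]}`, encoder `b`
sees `S^b_{[t]}`) and a decoder with complete state information. -/
structure Code (M : FSMAC S Sa Sb Xa Xb Y) (n : ℕ) (Wa Wb : Type) : Type where
  encA : (t : Fin n) → (Fin (t.1 + 1) → Sa) → Wa → Xa
  encB : (t : Fin n) → (Fin (t.1 + 1) → Sb) → Wb → Xb
  dec : (Fin n → S) → (Fin n → Y) → Wa × Wb

/-- Joint pmf on messages, state sequences, noisy-observation sequences and outputs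
induced by a code (messages uniform and independent; memoryless channel and state). -/
def codeProb (M : FSMAC S Sa Sb Xa Xb Y) {n : ℕ} {Wa Wb : Type}
    [Fintype Wa] [Fintype Wb] (C : Code M n Wa Wb) (wa : Wa) (wb : Wb)
    (s : Fin n → S) (sa : Fin n → Sa) (sb : Fin n → Sb) (y : Fin n → Y) : ℝ :=
  (Fintype.card Wa : ℝ)⁻¹ * (Fintype.card Wb : ℝ)⁻¹ *
    ∏ t : Fin n,
      (M.PS (s t) * M.Qa (s t) (sa t) * M.Qb (s t) (sb t) *
        M.chan (C.encA t (fun i => sa (Fin.castLE t.isLt i)) wa)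
          (C.encB t (fun i => sb (Fin.castLE t.isLt i)) wb) (s t) (y t))

open Classical in
/-- Probability of an event under the code-induced joint law. -/
def codePr (M : FSMAC S Sa Sb Xa Xb Y) {n : ℕ} {Wa Wb : Type}
    [Fintype Wa] [Fintype Wb] (C : Code M n Wa Wb)
    (E : Wa → Wb → (Fin n → S) → (Fin n → Sa) → (Fin n → Sb) → (Fin n → Y) → Prop) : ℝ :=
  ∑ wa, ∑ wb, ∑ s, ∑ sa, ∑ sb, ∑ y,
    if E wa wb s sa sb y then codeProb M C wa wb s sa sb y else 0

/-- Average probability of error of a code. -/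
def errProb (M : FSMAC S Sa Sb Xa Xb Y) {n : ℕ} {Wa Wb : Type}
    [Fintype Wa] [Fintype Wb] (C : Code M n Wa Wb) : ℝ :=
  codePr M C (fun wa wb s _ _ y => C.dec s y ≠ (wa, wb))

/-- A rate pair is achievable if for every `ε > 0` and all large enough `n` there is a
code of blocklength `n` with rates at least `(Ra, Rb)` and error probability `≤ ε`. -/
def Achievable (M : FSMAC S Sa Sb Xa Xb Y) (Ra Rb : ℝ) : Prop :=
  0 ≤ Ra ∧ 0 ≤ Rb ∧
    ∀ ε : ℝ, 0 < ε → ∃ N : ℕ, ∀ n : ℕ, N ≤ n →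
      ∃ (Ma Mb : ℕ) (C : Code M n (Fin Ma) (Fin Mb)),
        Ra ≤ Real.logb 2 Ma / n ∧ Rb ≤ Real.logb 2 Mb / n ∧ errProb M C ≤ ε

/-- The capacity region `C_FS`: closure of the set of achievable rate pairs. -/
def capRegion (M : FSMAC S Sa Sb Xa Xb Y) : Set (ℝ × ℝ) :=
  closure {R : ℝ × ℝ | Achievable M R.1 R.2}

/-- `sup_{π_{T^a} ⊗ π_{T^b}} I(T^a,T^b;Y|S)`. -/
def sumRateSup (M : FSMAC S Sa Sb Xa Xb Y) : ℝ :=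
  sSup {x : ℝ | ∃ (πa : (Sa → Xa) → ℝ) (πb : (Sb → Xb) → ℝ),
    isPMF πa ∧ isPMF πb ∧ x = Isum M πa πb}

/-- Binary entropy function (base 2). -/
def binEnt (x : ℝ) : ℝ := -(x * Real.logb 2 x) - (1 - x) * Real.logb 2 (1 - x)

/-- The strict prefix `x_{[t-1]}` of a length-`n` sequence (entries before time `t`). -/
def prefixOf {α : Type} {n : ℕ} (x : Fin n → α) (t : Fin n) : Fin t.1 → α :=
  fun i => x (Fin.castLE t.isLt.le i)

/-- The Shannon strategy `T_t^a = φ_t^a(W_a, S^a_{[t-1]})` induced by encoder `a`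
at time `t`: the map `s^a ↦ φ_t^a((S^a_{[t-1]}, s^a), W_a)`. -/
def stratA {S Sa Sb Xa Xb Y : Type} [Fintype S] [Fintype Sa] [Fintype Sb]
    [Fintype Xa] [Fintype Xb] [Fintype Y] {M : FSMAC S Sa Sb Xa Xb Y} {n : ℕ}
    {Wa Wb : Type} (C : Code M n Wa Wb) (t : Fin n) (wa : Wa) (sa : Fin n → Sa) :
    Sa → Xa :=
  fun x => C.encA t (Fin.snoc (prefixOf sa t) x) wa

/-- The Shannon strategy `T_t^b = φ_t^b(W_b, S^b_{[t-1]})` induced by encoder `b`. -/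
def stratB {S Sa Sb Xa Xb Y : Type} [Fintype S] [Fintype Sa] [Fintype Sb]
    [Fintype Xa] [Fintype Xb] [Fintype Y] {M : FSMAC S Sa Sb Xa Xb Y} {n : ℕ}
    {Wa Wb : Type} (C : Code M n Wa Wb) (t : Fin n) (wb : Wb) (sb : Fin n → Sb) :
    Sb → Xb :=
  fun x => C.encB t (Fin.snoc (prefixOf sb t) x) wb

variable {S Sa Sb Xa Xb Y : Type} [Fintype S] [Fintype Sa] [Fintype Sb]
  [Fintype Xa] [Fintype Xb] [Fintype Y] [DecidableEq Sa] [DecidableEq Sb]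

/-- Conditional joint law of `(T_t^a, T_t^b, Y_t, S_t)` given `S_{[t-1]} = σ`,
under the code-induced law. -/
def condLaw (M : FSMAC S Sa Sb Xa Xb Y) {n : ℕ} {Wa Wb : Type}
    [Fintype Wa] [Fintype Wb] (C : Code M n Wa Wb) (t : Fin n) (σ : Fin t.1 → S) :
    ((Sa → Xa) × (Sb → Xb)) × Y × S → ℝ :=
  fun x =>
    codePr M C (fun wa wb s sa sb y =>
        prefixOf s t = σ ∧ stratA C t wa sa = x.1.1 ∧ stratB C t wb sb = x.1.2 ∧
          y t = x.2.1 ∧ s t = x.2.2) /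
      codePr M C (fun _ _ s _ _ _ => prefixOf s t = σ)

/-- The strategy `φ_t^a(w_a, σ_a) ∈ 𝒯^a` obtained from encoder `a` by fixing the
observation prefix to `σ_a` and the message to `w_a`. -/
def encStratA {M : FSMAC S Sa Sb Xa Xb Y} {n : ℕ} {Wa Wb : Type}
    (C : Code M n Wa Wb) (t : Fin n) (σa : Fin t.1 → Sa) (wa : Wa) : Sa → Xa :=
  fun x => C.encA t (Fin.snoc σa x) wa

/-- The strategy `φ_t^b(w_b, σ_b) ∈ 𝒯^b`. -/
def encStratB {M : FSMAC S Sa Sb Xa Xb Y} {n : ℕ} {Wa Wb : Type}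
    (C : Code M n Wa Wb) (t : Fin n) (σb : Fin t.1 → Sb) (wb : Wb) : Sb → Xb :=
  fun x => C.encB t (Fin.snoc σb x) wb

open Classical in
/-- `π^σ_{T^a}(t^a) = Σ_{σ_a} P(S^a_{[t-1]} = σ_a | S_{[t-1]} = σ) ·
|{w_a : φ_t^a(w_a,σ_a) = t^a}| / |𝒲_a|`. -/
def piA (M : FSMAC S Sa Sb Xa Xb Y) {n : ℕ} {Wa Wb : Type}
    [Fintype Wa] [Fintype Wb] (C : Code M n Wa Wb) (t : Fin n) (σ : Fin t.1 → S)
    (ta : Sa → Xa) : ℝ :=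
  ∑ σa : Fin t.1 → Sa,
    (codePr M C (fun _ _ s sa _ _ => prefixOf s t = σ ∧ prefixOf sa t = σa) /
        codePr M C (fun _ _ s _ _ _ => prefixOf s t = σ)) *
      ((Finset.univ.filter fun wa : Wa => encStratA C t σa wa = ta).card /
        (Fintype.card Wa : ℝ))

open Classical in
/-- `π^σ_{T^b}(t^b)`, defined analogously. -/
def piB (M : FSMAC S Sa Sb Xa Xb Y) {n : ℕ} {Wa Wb : Type}
    [Fintype Wa] [Fintype Wb] (C : Code M n Wa Wb) (t : Fin n) (σ : Fin t.1 → S)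
    (tb : Sb → Xb) : ℝ :=
  ∑ σb : Fin t.1 → Sb,
    (codePr M C (fun _ _ s _ sb _ => prefixOf s t = σ ∧ prefixOf sb t = σb) /
        codePr M C (fun _ _ s _ _ _ => prefixOf s t = σ)) *
      ((Finset.univ.filter fun wb : Wb => encStratB C t σb wb = tb).card /
        (Fintype.card Wb : ℝ))

/-- `η(ε) = (ε/(1-ε))·log₂|𝒴| + H_b(ε)/(1-ε)`. -/
def eta (Ycard : ℕ) (ε : ℝ) : ℝ :=
  ε / (1 - ε) * Real.logb 2 Ycard + binEnt ε / (1 - ε)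

section ProductFormAux

open Classical in
lemma sum_prod_fun {ι α : Type} [Fintype ι] [DecidableEq ι] [Fintype α] (h : ι → α → ℝ) :
    ∑ x : ι → α, ∏ i, h i (x i) = ∏ i, ∑ a, h i a := by
  rw [Finset.prod_univ_sum (fun _ => (univ : Finset α)) h]
  rw [Fintype.piFinset_univ]

lemma sum_fun_prod {ι β γ : Type} [Fintype ι] [DecidableEq ι] [Fintype β] [Fintype γ]
    (F : (ι → β × γ) → ℝ) :
    ∑ f : ι → β × γ, F f = ∑ b : ι → β, ∑ c : ι → γ, F (fun i => (b i, c i)) := by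
  classical
  have e1 : ∑ f : ι → β × γ, F f
      = ∑ p : (ι → β) × (ι → γ), F (fun i => (p.1 i, p.2 i)) :=
    Fintype.sum_equiv (Equiv.arrowProdEquivProdArrow ι (fun _ => β) (fun _ => γ))
      F (fun p => F (fun i => (p.1 i, p.2 i))) (fun f => rfl)
  rw [e1, Fintype.sum_prod_type]

open Classical in
lemma pin_lemma {ι α : Type} [Fintype ι] [DecidableEq ι] [Fintype α] (A : Finset ι) (v : ι → α)
    (g : ι → α → ℝ) (hg : ∀ i, i ∉ A → ∑ a, g i a = 1) :
    ∑ x : ι → α, (if ∀ i ∈ A, x i = v i then ∏ i, g i (x i) else 0)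
      = ∏ i ∈ A, g i (v i) := by
  have key : ∀ x : ι → α,
      (if ∀ i ∈ A, x i = v i then ∏ i, g i (x i) else 0)
        = ∏ i, (if i ∈ A then (if x i = v i then g i (x i) else 0) else g i (x i)) := by
    intro x
    by_cases h : ∀ i ∈ A, x i = v i
    · rw [if_pos h]
      refine Finset.prod_congr rfl fun i _ => ?_
      by_cases hi : i ∈ A
      · simp [hi, h i hi]
      · simp [hi]
    · rw [if_neg h]
      push_neg at h
      obtain ⟨i₀, hi₀, hx⟩ := h
      exact (Finset.prod_eq_zero (Finset.mem_univ i₀) (by simp [hi₀, hx])).symm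
  simp_rw [key]
  refine (sum_prod_fun (fun i a =>
    if i ∈ A then (if a = v i then g i a else 0) else g i a)).trans ?_
  have : ∀ i, (∑ a, (if i ∈ A then (if a = v i then g i a else 0) else g i a))
      = (if i ∈ A then g i (v i) else 1) := by
    intro i
    by_cases hi : i ∈ A
    · simp [hi]
    · simp [hi, hg i hi]
  simp_rw [this]
  rw [Finset.prod_ite_mem, Finset.univ_inter]

open Classical in
lemma marg_lemma {α : Type} [Fintype α] {n : ℕ} (t : Fin n) (g : α → ℝ)
    (hg : ∑ a, g a = 1) (F : (Fin t.1 → α) → α → ℝ) :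
    ∑ x : Fin n → α, F (fun j => x (Fin.castLE t.isLt.le j)) (x t) * ∏ i, g (x i)
      = ∑ p : Fin t.1 → α, ∑ a : α, F p a * (g a * ∏ j, g (p j)) := by
  set A : Finset (Fin n) := insert t ((univ : Finset (Fin t.1)).image (Fin.castLE t.isLt.le))
    with hA
  set v : (Fin t.1 → α) → α → Fin n → α :=
    fun p a i => if h : (i : ℕ) < t.1 then p ⟨i, h⟩ else a with hvdef
  have htA : t ∉ (univ : Finset (Fin t.1)).image (Fin.castLE t.isLt.le) := by
    simp only [Finset.mem_image, Finset.mem_univ, true_and]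
    rintro ⟨j, hj⟩
    have h2 : (j : ℕ) = t.1 := congrArg Fin.val hj
    have := j.isLt
    omega
  have hvt : ∀ (p : Fin t.1 → α) (a : α), v p a t = a := by
    intro p a
    simp only [hvdef]
    exact dif_neg (lt_irrefl _)
  have hvc : ∀ (p : Fin t.1 → α) (a : α) (j : Fin t.1),
      v p a (Fin.castLE t.isLt.le j) = p j := by
    intro p a j
    simp only [hvdef]
    have hj : ((Fin.castLE t.isLt.le j : Fin n) : ℕ) < t.1 := j.isLt
    rw [dif_pos hj]
    exact congrArg p (Fin.ext rfl)
  have hv : ∀ (p : Fin t.1 → α) (a : α) (x : Fin n → α),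
      ((fun j => x (Fin.castLE t.isLt.le j)) = p ∧ x t = a) ↔
        (∀ i ∈ A, x i = v p a i) := by
    intro p a x
    constructor
    · rintro ⟨hp, ha⟩ i hi
      rw [hA, Finset.mem_insert] at hi
      rcases hi with rfl | hi
      · simp [hvdef, ha]
      · simp only [Finset.mem_image, Finset.mem_univ, true_and] at hi
        obtain ⟨j, rfl⟩ := hi
        rw [hvc]
        exact congrFun hp j
    · intro h
      constructor
      · funext j
        have := h (Fin.castLE t.isLt.le j) (by
          rw [hA]; exact Finset.mem_insert_of_mem (Finset.mem_image_of_mem _ (mem_univ j)))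
        rw [hvc] at this
        exact this
      · have := h t (by rw [hA]; exact Finset.mem_insert_self _ _)
        rw [hvt] at this
        exact this
  have expand : ∀ x : Fin n → α,
      F (fun j => x (Fin.castLE t.isLt.le j)) (x t) * ∏ i, g (x i)
        = ∑ p : Fin t.1 → α, ∑ a : α,
            (if ((fun j => x (Fin.castLE t.isLt.le j)) = p ∧ x t = a)
              then F p a * ∏ i, g (x i) else 0) := by
    intro x
    rw [Finset.sum_comm]
    rw [Finset.sum_eq_single (x t)
      (fun a _ ha => Finset.sum_eq_zero fun p _ => if_neg (fun h => ha h.2.symm))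
      (fun h => absurd (mem_univ _) h)]
    rw [Finset.sum_eq_single (fun j => x (Fin.castLE t.isLt.le j))
      (fun p _ hp => if_neg (fun h => hp h.1.symm))
      (fun h => absurd (mem_univ _) h)]
    rw [if_pos ⟨rfl, rfl⟩]
  simp_rw [expand]
  rw [Finset.sum_comm]
  refine Finset.sum_congr rfl fun p _ => ?_
  rw [Finset.sum_comm]
  refine Finset.sum_congr rfl fun a _ => ?_
  have key : ∀ x : Fin n → α,
      (if ((fun j => x (Fin.castLE t.isLt.le j)) = p ∧ x t = a)
        then F p a * ∏ i, g (x i) else 0)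
      = F p a * (if (∀ i ∈ A, x i = v p a i)
          then ∏ i, g (x i) else 0) := by
    intro x
    rw [if_congr (hv p a x) rfl rfl]
    by_cases h : ∀ i ∈ A, x i = v p a i
    · rw [if_pos h, if_pos h]
    · rw [if_neg h, if_neg h, mul_zero]
  simp_rw [key, ← Finset.mul_sum]
  have hpin := pin_lemma A (v p a) (fun _ b => g b) (fun _ _ => hg)
  have h2 : ∏ i ∈ A, g (v p a i) = g a * ∏ j, g (p j) := by
    rw [hA, Finset.prod_insert htA,
      Finset.prod_image (fun x _ y _ h => Fin.castLE_injective _ h), hvt]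
    exact congrArg (fun z => g a * z)
      (Finset.prod_congr rfl fun j _ => congrArg g (hvc p a j))
  refine congrArg (fun z => F p a * z) ?_
  refine Eq.trans ?_ (hpin.trans h2)
  exact Finset.sum_congr rfl fun x _ => by congr

/-- Single-letter joint weight of `(S, Sᵃ, Sᵇ)`. -/
def gTrip (M : FSMAC S Sa Sb Xa Xb Y) : S × Sa × Sb → ℝ :=
  fun u => M.PS u.1 * M.Qa u.1 u.2.1 * M.Qb u.1 u.2.2

lemma gTrip_sum (M : FSMAC S Sa Sb Xa Xb Y) : ∑ u : S × Sa × Sb, gTrip M u = 1 := by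
  rw [Fintype.sum_prod_type]
  have h1 : ∀ s : S, ∑ q : Sa × Sb, gTrip M (s, q)
      = M.PS s * ((∑ sa, M.Qa s sa) * (∑ sb, M.Qb s sb)) := by
    intro s
    rw [Fintype.sum_prod_type]
    rw [Finset.sum_mul_sum, Finset.mul_sum]
    refine Finset.sum_congr rfl fun sa _ => ?_
    rw [Finset.mul_sum]
    refine Finset.sum_congr rfl fun sb _ => ?_
    show M.PS s * M.Qa s sa * M.Qb s sb = _
    ring
  simp_rw [h1, (M.Qa_pmf _).2, (M.Qb_pmf _).2, one_mul, mul_one]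
  exact M.PS_pmf.2

open Classical in
lemma codePr_eval (M : FSMAC S Sa Sb Xa Xb Y) {n : ℕ} {Wa Wb : Type}
    [Fintype Wa] [Fintype Wb] (C : Code M n Wa Wb)
    (E : Wa → Wb → (Fin n → S) → (Fin n → Sa) → (Fin n → Sb) → Prop) :
    codePr M C (fun wa wb s sa sb _ => E wa wb s sa sb)
      = (Fintype.card Wa : ℝ)⁻¹ * (Fintype.card Wb : ℝ)⁻¹ *
        ∑ wa, ∑ wb, ∑ z : Fin n → S × Sa × Sb,
          (if E wa wb (fun i => (z i).1) (fun i => (z i).2.1) (fun i => (z i).2.2)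
            then ∏ i, gTrip M (z i) else 0) := by
  rw [codePr]
  have hy : ∀ (wa : Wa) (wb : Wb) (sv : Fin n → S) (sa : Fin n → Sa) (sb : Fin n → Sb),
      (∑ y : Fin n → Y, if E wa wb sv sa sb then codeProb M C wa wb sv sa sb y else 0)
      = (Fintype.card Wa : ℝ)⁻¹ * (Fintype.card Wb : ℝ)⁻¹ *
        (if E wa wb sv sa sb
          then ∏ i, (M.PS (sv i) * M.Qa (sv i) (sa i) * M.Qb (sv i) (sb i)) else 0) := by
    intro wa wb sv sa sb
    by_cases h : E wa wb sv sa sb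
    · rw [if_pos h]
      simp_rw [if_pos h]
      set Ch : Fin n → Y → ℝ := fun i y' =>
        M.chan (C.encA i (fun j => sa (Fin.castLE i.isLt j)) wa)
          (C.encB i (fun j => sb (Fin.castLE i.isLt j)) wb) (sv i) y' with hCh
      have hprob : ∀ y : Fin n → Y, codeProb M C wa wb sv sa sb y
          = (Fintype.card Wa : ℝ)⁻¹ * (Fintype.card Wb : ℝ)⁻¹ *
            (∏ i, (M.PS (sv i) * M.Qa (sv i) (sa i) * M.Qb (sv i) (sb i)))
            * ∏ i, Ch i (y i) := by
        intro y
        rw [codeProb]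
        rw [show (∏ i : Fin n,
            (M.PS (sv i) * M.Qa (sv i) (sa i) * M.Qb (sv i) (sb i) *
              M.chan (C.encA i (fun j => sa (Fin.castLE i.isLt j)) wa)
                (C.encB i (fun j => sb (Fin.castLE i.isLt j)) wb) (sv i) (y i)))
          = (∏ i, (M.PS (sv i) * M.Qa (sv i) (sa i) * M.Qb (sv i) (sb i)))
            * ∏ i, Ch i (y i) from Finset.prod_mul_distrib]
        ring
      simp_rw [hprob, ← Finset.mul_sum]
      have : ∑ y : Fin n → Y, ∏ i, Ch i (y i) = 1 := by
        rw [sum_prod_fun Ch]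
        have : ∀ i, ∑ y', Ch i y' = 1 := fun i => (M.chan_pmf _ _ _).2
        simp [this]
      rw [this, mul_one]
    · simp [h]
  simp_rw [hy, ← Finset.mul_sum]
  refine congrArg (fun r => (Fintype.card Wa : ℝ)⁻¹ * (Fintype.card Wb : ℝ)⁻¹ * r) ?_
  refine Finset.sum_congr rfl fun wa _ => Finset.sum_congr rfl fun wb _ => ?_
  rw [sum_fun_prod (fun z : Fin n → S × Sa × Sb =>
    (if E wa wb (fun i => (z i).1) (fun i => (z i).2.1) (fun i => (z i).2.2)
      then ∏ i, gTrip M (z i) else 0))]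
  refine Finset.sum_congr rfl fun sv _ => ?_
  rw [sum_fun_prod (fun c : Fin n → Sa × Sb =>
    (if E wa wb (fun i => sv i) (fun i => (c i).1) (fun i => (c i).2)
      then ∏ i, gTrip M (sv i, c i) else 0))]
  exact Finset.sum_congr rfl fun sa _ => Finset.sum_congr rfl fun sb _ => rfl

open Classical in
lemma psum_eval (M : FSMAC S Sa Sb Xa Xb Y) {m : ℕ} (σ : Fin m → S)
    (Pa : (Fin m → Sa) → Prop) (Pb : (Fin m → Sb) → Prop) :
    ∑ p : Fin m → S × Sa × Sb,
      (if ((fun j => (p j).1) = σ ∧ Pa (fun j => (p j).2.1) ∧ Pb (fun j => (p j).2.2))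
        then (1:ℝ) else 0) * ∏ j, gTrip M (p j)
    = (∏ j, M.PS (σ j))
      * (∑ pa : Fin m → Sa, (if Pa pa then (1:ℝ) else 0) * ∏ j, M.Qa (σ j) (pa j))
      * (∑ pb : Fin m → Sb, (if Pb pb then (1:ℝ) else 0) * ∏ j, M.Qb (σ j) (pb j)) := by
  have split1 := sum_fun_prod (fun p : Fin m → S × Sa × Sb =>
    (if ((fun j => (p j).1) = σ ∧ Pa (fun j => (p j).2.1) ∧ Pb (fun j => (p j).2.2))
      then (1:ℝ) else 0) * ∏ j, gTrip M (p j))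
  refine split1.trans ?_
  have split2 : ∀ ps : Fin m → S,
      (∑ c : Fin m → Sa × Sb,
        (if ((fun j => ps j) = σ ∧ Pa (fun j => (c j).1) ∧ Pb (fun j => (c j).2))
          then (1:ℝ) else 0) * ∏ j, gTrip M (ps j, c j))
      = ∑ pa : Fin m → Sa, ∑ pb : Fin m → Sb,
        (if (ps = σ ∧ Pa pa ∧ Pb pb) then (1:ℝ) else 0)
          * ∏ j, gTrip M (ps j, pa j, pb j) := by
    intro ps
    refine (sum_fun_prod (fun c : Fin m → Sa × Sb =>
      (if ((fun j => ps j) = σ ∧ Pa (fun j => (c j).1) ∧ Pb (fun j => (c j).2))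
        then (1:ℝ) else 0) * ∏ j, gTrip M (ps j, c j))).trans ?_
    exact Finset.sum_congr rfl fun pa _ => Finset.sum_congr rfl fun pb _ => rfl
  simp_rw [split2]
  have hsplit : ∀ (ps : Fin m → S) (pa : Fin m → Sa) (pb : Fin m → Sb),
      (if (ps = σ ∧ Pa pa ∧ Pb pb) then (1:ℝ) else 0)
          * ∏ j, gTrip M (ps j, pa j, pb j)
      = ((if ps = σ then (1:ℝ) else 0) * ∏ j, M.PS (ps j))
        * (((if Pa pa then (1:ℝ) else 0) * ∏ j, M.Qa (ps j) (pa j))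
          * ((if Pb pb then (1:ℝ) else 0) * ∏ j, M.Qb (ps j) (pb j))) := by
    intro ps pa pb
    have hprod : ∏ j, gTrip M (ps j, pa j, pb j)
        = ((∏ j, M.PS (ps j)) * ∏ j, M.Qa (ps j) (pa j)) * ∏ j, M.Qb (ps j) (pb j) := by
      calc ∏ j, gTrip M (ps j, pa j, pb j)
          = ∏ j, (M.PS (ps j) * M.Qa (ps j) (pa j) * M.Qb (ps j) (pb j)) := rfl
        _ = (∏ j, (M.PS (ps j) * M.Qa (ps j) (pa j))) * ∏ j, M.Qb (ps j) (pb j) :=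
            Finset.prod_mul_distrib
        _ = ((∏ j, M.PS (ps j)) * ∏ j, M.Qa (ps j) (pa j)) * ∏ j, M.Qb (ps j) (pb j) := by
            rw [Finset.prod_mul_distrib]
    rw [hprod]
    by_cases h1 : ps = σ <;> by_cases h2 : Pa pa <;> by_cases h3 : Pb pb <;>
      simp [h1, h2, h3] <;> ring
  simp_rw [hsplit]
  simp_rw [← Finset.mul_sum, ← Finset.sum_mul]
  have hps : ∀ ps : Fin m → S,
      ((if ps = σ then (1:ℝ) else 0) * ∏ j, M.PS (ps j))
        * (((∑ pa : Fin m → Sa, (if Pa pa then (1:ℝ) else 0) * ∏ j, M.Qa (ps j) (pa j)))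
          * ((∑ pb : Fin m → Sb, (if Pb pb then (1:ℝ) else 0) * ∏ j, M.Qb (ps j) (pb j))))
      = (if ps = σ then
          ((∏ j, M.PS (σ j))
            * (∑ pa : Fin m → Sa, (if Pa pa then (1:ℝ) else 0) * ∏ j, M.Qa (σ j) (pa j))
            * (∑ pb : Fin m → Sb, (if Pb pb then (1:ℝ) else 0) * ∏ j, M.Qb (σ j) (pb j)))
          else 0) := by
    intro ps
    by_cases h : ps = σ
    · subst h
      rw [if_pos rfl, if_pos rfl]
      ring
    · simp [h]
  simp_rw [hps]
  rw [Finset.sum_ite_eq' Finset.univ σ]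
  simp


open Classical in
lemma zsum_eval (M : FSMAC S Sa Sb Xa Xb Y) {n : ℕ} (t : Fin n) (σ : Fin t.1 → S)
    (Pa : (Fin t.1 → Sa) → Prop) (Pb : (Fin t.1 → Sb) → Prop) (Pc : S × Sa × Sb → Prop) :
    ∑ z : Fin n → S × Sa × Sb,
      (if (((fun j => (z (Fin.castLE t.isLt.le j)).1) = σ
            ∧ Pa (fun j => (z (Fin.castLE t.isLt.le j)).2.1)
            ∧ Pb (fun j => (z (Fin.castLE t.isLt.le j)).2.2))
            ∧ Pc (z t))
        then ∏ i, gTrip M (z i) else 0)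
    = (∑ u : S × Sa × Sb, (if Pc u then (1:ℝ) else 0) * gTrip M u)
      * ((∏ j, M.PS (σ j))
        * (∑ pa : Fin t.1 → Sa, (if Pa pa then (1:ℝ) else 0) * ∏ j, M.Qa (σ j) (pa j))
        * (∑ pb : Fin t.1 → Sb, (if Pb pb then (1:ℝ) else 0) * ∏ j, M.Qb (σ j) (pb j))) := by
  set F : (Fin t.1 → S × Sa × Sb) → S × Sa × Sb → ℝ := fun p a =>
    (if (((fun j => (p j).1) = σ ∧ Pa (fun j => (p j).2.1) ∧ Pb (fun j => (p j).2.2)) ∧ Pc a)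
      then (1:ℝ) else 0) with hF
  have step1 : ∑ z : Fin n → S × Sa × Sb,
      (if (((fun j => (z (Fin.castLE t.isLt.le j)).1) = σ
            ∧ Pa (fun j => (z (Fin.castLE t.isLt.le j)).2.1)
            ∧ Pb (fun j => (z (Fin.castLE t.isLt.le j)).2.2))
            ∧ Pc (z t))
        then ∏ i, gTrip M (z i) else 0)
      = ∑ z : Fin n → S × Sa × Sb,
          F (fun j => z (Fin.castLE t.isLt.le j)) (z t) * ∏ i, gTrip M (z i) := by
    refine Finset.sum_congr rfl fun z _ => ?_
    rw [hF]
    exact (boole_mul _ _).symm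
  rw [step1, marg_lemma t (gTrip M) (gTrip_sum M) F]
  have step2 : ∀ (p : Fin t.1 → S × Sa × Sb) (a : S × Sa × Sb),
      F p a * (gTrip M a * ∏ j, gTrip M (p j))
      = ((if Pc a then (1:ℝ) else 0) * gTrip M a)
        * ((if ((fun j => (p j).1) = σ ∧ Pa (fun j => (p j).2.1) ∧ Pb (fun j => (p j).2.2))
            then (1:ℝ) else 0) * ∏ j, gTrip M (p j)) := by
    intro p a
    rw [hF]
    by_cases hq : ((fun j => (p j).1) = σ ∧ Pa (fun j => (p j).2.1) ∧ Pb (fun j => (p j).2.2)) <;>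
      by_cases hc : Pc a <;> simp [hq, hc] <;> ring
  simp_rw [step2, ← Finset.sum_mul, ← Finset.mul_sum]
  exact congrArg (fun r => (∑ u : S × Sa × Sb, (if Pc u then (1:ℝ) else 0) * gTrip M u) * r)
    (psum_eval M σ Pa Pb)


open Classical in
lemma trivA_sum (M : FSMAC S Sa Sb Xa Xb Y) {m : ℕ} (σ : Fin m → S) :
    ∑ pa : Fin m → Sa, ∏ j, M.Qa (σ j) (pa j) = 1 := by
  rw [sum_prod_fun (fun j a => M.Qa (σ j) a)]
  simp [(M.Qa_pmf _).2]

open Classical in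
lemma trivB_sum (M : FSMAC S Sa Sb Xa Xb Y) {m : ℕ} (σ : Fin m → S) :
    ∑ pb : Fin m → Sb, ∏ j, M.Qb (σ j) (pb j) = 1 := by
  rw [sum_prod_fun (fun j a => M.Qb (σ j) a)]
  simp [(M.Qb_pmf _).2]

open Classical in
lemma pinA_sum (M : FSMAC S Sa Sb Xa Xb Y) {m : ℕ} (σ : Fin m → S) (σa : Fin m → Sa) :
    ∑ pa : Fin m → Sa, (if pa = σa then (1:ℝ) else 0) * ∏ j, M.Qa (σ j) (pa j)
      = ∏ j, M.Qa (σ j) (σa j) := by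
  have h : ∀ pa : Fin m → Sa, (if pa = σa then (1:ℝ) else 0) * ∏ j, M.Qa (σ j) (pa j)
      = if pa = σa then (∏ j, M.Qa (σ j) (σa j)) else 0 := by
    intro pa; by_cases hp : pa = σa <;> simp [hp]
  simp_rw [h]
  rw [Finset.sum_ite_eq' Finset.univ σa]
  simp

open Classical in
lemma pinB_sum (M : FSMAC S Sa Sb Xa Xb Y) {m : ℕ} (σ : Fin m → S) (σb : Fin m → Sb) :
    ∑ pb : Fin m → Sb, (if pb = σb then (1:ℝ) else 0) * ∏ j, M.Qb (σ j) (pb j)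
      = ∏ j, M.Qb (σ j) (σb j) := by
  have h : ∀ pb : Fin m → Sb, (if pb = σb then (1:ℝ) else 0) * ∏ j, M.Qb (σ j) (pb j)
      = if pb = σb then (∏ j, M.Qb (σ j) (σb j)) else 0 := by
    intro pb; by_cases hp : pb = σb <;> simp [hp]
  simp_rw [h]
  rw [Finset.sum_ite_eq' Finset.univ σb]
  simp

open Classical in
lemma pinC_sum (M : FSMAC S Sa Sb Xa Xb Y) (u0 : S × Sa × Sb) :
    ∑ u : S × Sa × Sb, (if u = u0 then (1:ℝ) else 0) * gTrip M u = gTrip M u0 := by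
  have h : ∀ u : S × Sa × Sb, (if u = u0 then (1:ℝ) else 0) * gTrip M u
      = if u = u0 then gTrip M u0 else 0 := by
    intro u; by_cases hp : u = u0 <;> simp [hp]
  simp_rw [h]
  rw [Finset.sum_ite_eq' Finset.univ u0]
  simp

open Classical in
lemma CF_D (M : FSMAC S Sa Sb Xa Xb Y) {n : ℕ} {Wa Wb : Type}
    [Fintype Wa] [Fintype Wb] (C : Code M n Wa Wb) (t : Fin n) (σ : Fin t.1 → S) :
    codePr M C (fun _ _ s' _ _ _ => prefixOf s' t = σ)
      = (Fintype.card Wa : ℝ)⁻¹ * (Fintype.card Wb : ℝ)⁻¹ *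
        ((Fintype.card Wa : ℝ) * (Fintype.card Wb : ℝ) * ∏ j, M.PS (σ j)) := by
  refine (codePr_eval M C (fun _ _ s' _ _ => prefixOf s' t = σ)).trans ?_
  refine congrArg (fun r => (Fintype.card Wa : ℝ)⁻¹ * (Fintype.card Wb : ℝ)⁻¹ * r) ?_
  have hz : (∑ z : Fin n → S × Sa × Sb,
      @ite ℝ (prefixOf (fun i => (z i).1) t = σ) (Classical.propDecidable _)
        (∏ i, gTrip M (z i)) 0)
      = ∏ j, M.PS (σ j) := by
    refine Eq.trans (Finset.sum_congr rfl fun z _ => ?_)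
      ((zsum_eval M t σ (fun _ => True) (fun _ => True) (fun _ => True)).trans ?_)
    · congr 1
      rw [eq_iff_iff]
      constructor
      · intro h; exact ⟨⟨h, trivial, trivial⟩, trivial⟩
      · rintro ⟨⟨h, -, -⟩, -⟩; exact h
    · simp only [if_true, one_mul]
      rw [gTrip_sum M, trivA_sum M σ, trivB_sum M σ]
      ring
  refine Eq.trans (Finset.sum_congr rfl fun wa _ => Finset.sum_congr rfl fun wb _ => hz) ?_
  simp [Finset.sum_const, Finset.card_univ, nsmul_eq_mul]
  ring

open Classical in
lemma CF_A (M : FSMAC S Sa Sb Xa Xb Y) {n : ℕ} {Wa Wb : Type}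
    [Fintype Wa] [Fintype Wb] (C : Code M n Wa Wb) (t : Fin n) (σ : Fin t.1 → S)
    (σa : Fin t.1 → Sa) :
    codePr M C (fun _ _ s sa _ _ => prefixOf s t = σ ∧ prefixOf sa t = σa)
      = (Fintype.card Wa : ℝ)⁻¹ * (Fintype.card Wb : ℝ)⁻¹ *
        ((Fintype.card Wa : ℝ) * (Fintype.card Wb : ℝ) *
          ((∏ j, M.PS (σ j)) * ∏ j, M.Qa (σ j) (σa j))) := by
  refine (codePr_eval M C (fun _ _ s sa _ => prefixOf s t = σ ∧ prefixOf sa t = σa)).trans ?_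
  refine congrArg (fun r => (Fintype.card Wa : ℝ)⁻¹ * (Fintype.card Wb : ℝ)⁻¹ * r) ?_
  have hz : (∑ z : Fin n → S × Sa × Sb,
      @ite ℝ (prefixOf (fun i => (z i).1) t = σ ∧ prefixOf (fun i => (z i).2.1) t = σa)
        (Classical.propDecidable _) (∏ i, gTrip M (z i)) 0)
      = (∏ j, M.PS (σ j)) * ∏ j, M.Qa (σ j) (σa j) := by
    refine Eq.trans (Finset.sum_congr rfl fun z _ => ?_)
      ((zsum_eval M t σ (fun pa => pa = σa) (fun _ => True) (fun _ => True)).trans ?_)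
    · congr 1
      rw [eq_iff_iff]
      constructor
      · rintro ⟨h1, h2⟩; exact ⟨⟨h1, h2, trivial⟩, trivial⟩
      · rintro ⟨⟨h1, h2, -⟩, -⟩; exact ⟨h1, h2⟩
    · simp only [if_true, one_mul]
      rw [gTrip_sum M, trivB_sum M σ]
      have hpa : ∀ pa : Fin t.1 → Sa,
          ((@ite ℝ (pa = σa) (Classical.propDecidable _) (1:ℝ) 0) * ∏ j, M.Qa (σ j) (pa j))
          = (if pa = σa then (∏ j, M.Qa (σ j) (σa j)) else 0) :=
        fun pa => by by_cases hp : pa = σa <;> simp [hp]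
      simp_rw [hpa]
      rw [Finset.sum_ite_eq' Finset.univ σa]
      simp
  refine Eq.trans (Finset.sum_congr rfl fun wa _ => Finset.sum_congr rfl fun wb _ => hz) ?_
  simp [Finset.sum_const, Finset.card_univ, nsmul_eq_mul]
  ring

open Classical in
lemma CF_B (M : FSMAC S Sa Sb Xa Xb Y) {n : ℕ} {Wa Wb : Type}
    [Fintype Wa] [Fintype Wb] (C : Code M n Wa Wb) (t : Fin n) (σ : Fin t.1 → S)
    (σb : Fin t.1 → Sb) :
    codePr M C (fun _ _ s _ sb _ => prefixOf s t = σ ∧ prefixOf sb t = σb)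
      = (Fintype.card Wa : ℝ)⁻¹ * (Fintype.card Wb : ℝ)⁻¹ *
        ((Fintype.card Wa : ℝ) * (Fintype.card Wb : ℝ) *
          ((∏ j, M.PS (σ j)) * ∏ j, M.Qb (σ j) (σb j))) := by
  refine (codePr_eval M C (fun _ _ s _ sb => prefixOf s t = σ ∧ prefixOf sb t = σb)).trans ?_
  refine congrArg (fun r => (Fintype.card Wa : ℝ)⁻¹ * (Fintype.card Wb : ℝ)⁻¹ * r) ?_
  have hz : (∑ z : Fin n → S × Sa × Sb,
      @ite ℝ (prefixOf (fun i => (z i).1) t = σ ∧ prefixOf (fun i => (z i).2.2) t = σb)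
        (Classical.propDecidable _) (∏ i, gTrip M (z i)) 0)
      = (∏ j, M.PS (σ j)) * ∏ j, M.Qb (σ j) (σb j) := by
    refine Eq.trans (Finset.sum_congr rfl fun z _ => ?_)
      ((zsum_eval M t σ (fun _ => True) (fun pb => pb = σb) (fun _ => True)).trans ?_)
    · congr 1
      rw [eq_iff_iff]
      constructor
      · rintro ⟨h1, h2⟩; exact ⟨⟨h1, trivial, h2⟩, trivial⟩
      · rintro ⟨⟨h1, -, h2⟩, -⟩; exact ⟨h1, h2⟩
    · simp only [if_true, one_mul]
      rw [gTrip_sum M, trivA_sum M σ]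
      have hpb : ∀ pb : Fin t.1 → Sb,
          ((@ite ℝ (pb = σb) (Classical.propDecidable _) (1:ℝ) 0) * ∏ j, M.Qb (σ j) (pb j))
          = (if pb = σb then (∏ j, M.Qb (σ j) (σb j)) else 0) :=
        fun pb => by by_cases hp : pb = σb <;> simp [hp]
      simp_rw [hpb]
      rw [Finset.sum_ite_eq' Finset.univ σb]
      simp
  refine Eq.trans (Finset.sum_congr rfl fun wa _ => Finset.sum_congr rfl fun wb _ => hz) ?_
  simp [Finset.sum_const, Finset.card_univ, nsmul_eq_mul]
  ring


open Classical in
lemma CF_N (M : FSMAC S Sa Sb Xa Xb Y) {n : ℕ} {Wa Wb : Type}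
    [Fintype Wa] [Fintype Wb] (C : Code M n Wa Wb) (t : Fin n) (σ : Fin t.1 → S)
    (s : S) (sA : Sa) (sB : Sb) (ta : Sa → Xa) (tb : Sb → Xb) :
    codePr M C (fun wa' wb' s' sa' sb' _ =>
        prefixOf s' t = σ ∧ s' t = s ∧ sa' t = sA ∧ sb' t = sB ∧
          stratA C t wa' sa' = ta ∧ stratB C t wb' sb' = tb)
      = (Fintype.card Wa : ℝ)⁻¹ * (Fintype.card Wb : ℝ)⁻¹ *
        (gTrip M (s, sA, sB) *
          ((∏ j, M.PS (σ j))
            * (∑ wa : Wa, ∑ pa : Fin t.1 → Sa,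
                (@ite ℝ (encStratA C t pa wa = ta) (Classical.propDecidable _) (1:ℝ) 0)
                  * ∏ j, M.Qa (σ j) (pa j))
            * (∑ wb : Wb, ∑ pb : Fin t.1 → Sb,
                (@ite ℝ (encStratB C t pb wb = tb) (Classical.propDecidable _) (1:ℝ) 0)
                  * ∏ j, M.Qb (σ j) (pb j)))) := by
  refine (codePr_eval M C (fun wa wb s' sa' sb' =>
      prefixOf s' t = σ ∧ s' t = s ∧ sa' t = sA ∧ sb' t = sB ∧
        stratA C t wa sa' = ta ∧ stratB C t wb sb' = tb)).trans ?_
  refine congrArg (fun r => (Fintype.card Wa : ℝ)⁻¹ * (Fintype.card Wb : ℝ)⁻¹ * r) ?_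
  have hz : ∀ (wa : Wa) (wb : Wb), (∑ z : Fin n → S × Sa × Sb,
      @ite ℝ (prefixOf (fun i => (z i).1) t = σ ∧ (z t).1 = s
          ∧ (z t).2.1 = sA ∧ (z t).2.2 = sB
          ∧ stratA C t wa (fun i => (z i).2.1) = ta ∧ stratB C t wb (fun i => (z i).2.2) = tb)
        (Classical.propDecidable _) (∏ i, gTrip M (z i)) 0)
      = gTrip M (s, sA, sB) *
          ((∏ j, M.PS (σ j))
            * (∑ pa : Fin t.1 → Sa,
                (@ite ℝ (encStratA C t pa wa = ta) (Classical.propDecidable _) (1:ℝ) 0)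
                  * ∏ j, M.Qa (σ j) (pa j))
            * (∑ pb : Fin t.1 → Sb,
                (@ite ℝ (encStratB C t pb wb = tb) (Classical.propDecidable _) (1:ℝ) 0)
                  * ∏ j, M.Qb (σ j) (pb j))) := by
    intro wa wb
    refine Eq.trans (Finset.sum_congr rfl fun z _ => ?_)
      ((zsum_eval M t σ (fun pa => encStratA C t pa wa = ta)
        (fun pb => encStratB C t pb wb = tb) (fun u => u = (s, sA, sB))).trans ?_)
    · congr 1
      rw [eq_iff_iff]
      constructor
      · rintro ⟨h1, h2, h3, h4, h5, h6⟩
        exact ⟨⟨h1, h5, h6⟩, Prod.ext_iff.mpr ⟨h2, Prod.ext_iff.mpr ⟨h3, h4⟩⟩⟩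
      · rintro ⟨⟨h1, h5, h6⟩, hc⟩
        exact ⟨h1, by rw [hc], by rw [hc], by rw [hc], h5, h6⟩
    · have hpc : ∀ u : S × Sa × Sb,
          (@ite ℝ (u = (s, sA, sB)) (Classical.propDecidable _) (1:ℝ) 0) * gTrip M u
            = if u = (s, sA, sB) then gTrip M (s, sA, sB) else 0 :=
        fun u => by by_cases h : u = (s, sA, sB) <;> simp [h]
      simp_rw [hpc]
      rw [Finset.sum_ite_eq' Finset.univ (s, sA, sB)]
      simp
  refine Eq.trans (Finset.sum_congr rfl fun wa _ => Finset.sum_congr rfl fun wb _ => hz wa wb) ?_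
  calc ∑ wa : Wa, ∑ wb : Wb, gTrip M (s, sA, sB) *
          ((∏ j, M.PS (σ j))
            * (∑ pa : Fin t.1 → Sa,
                (@ite ℝ (encStratA C t pa wa = ta) (Classical.propDecidable _) (1:ℝ) 0)
                  * ∏ j, M.Qa (σ j) (pa j))
            * (∑ pb : Fin t.1 → Sb,
                (@ite ℝ (encStratB C t pb wb = tb) (Classical.propDecidable _) (1:ℝ) 0)
                  * ∏ j, M.Qb (σ j) (pb j)))
      = ∑ wa : Wa, (gTrip M (s, sA, sB) * ((∏ j, M.PS (σ j))
            * (∑ pa : Fin t.1 → Sa,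
                (@ite ℝ (encStratA C t pa wa = ta) (Classical.propDecidable _) (1:ℝ) 0)
                  * ∏ j, M.Qa (σ j) (pa j))))
          * ∑ wb : Wb, ∑ pb : Fin t.1 → Sb,
                (@ite ℝ (encStratB C t pb wb = tb) (Classical.propDecidable _) (1:ℝ) 0)
                  * ∏ j, M.Qb (σ j) (pb j) := by
        refine Finset.sum_congr rfl fun wa _ => ?_
        symm
        rw [Finset.mul_sum]
        exact Finset.sum_congr rfl fun wb _ => by ring
    _ = _ := by
        rw [← Finset.sum_mul, ← Finset.mul_sum, ← Finset.mul_sum]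
        ring


end ProductFormAux


/-- Product form of the Shannon strategies given the past complete state: for any time
`t` and any `σ ∈ 𝒮^{t-1}` with `P(S_{[t-1]} = σ) > 0`,
`P(S_t = s, S_t^a = s^a, S_t^b = s^b, T_t^a = t^a, T_t^b = t^b | S_{[t-1]} = σ)
  = P_{S,S^a,S^b}(s,s^a,s^b) · π^σ_{T^a}(t^a) · π^σ_{T^b}(t^b)`;
in particular, given `S_{[t-1]} = σ`, the pair `(T_t^a, T_t^b)` is independent of
`(S_t, S_t^a, S_t^b)` and `T_t^a, T_t^b` are conditionally independent with
conditional marginals `π^σ_{T^a}`, `π^σ_{T^b}`. -/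
theorem strategies_product_form {S Sa Sb Xa Xb Y : Type} [Fintype S] [Fintype Sa]
    [Fintype Sb] [Fintype Xa] [Fintype Xb] [Fintype Y] [DecidableEq Sa] [DecidableEq Sb]
    (M : FSMAC S Sa Sb Xa Xb Y) {n : ℕ} {Wa Wb : Type} [Fintype Wa] [Fintype Wb]
    (C : Code M n Wa Wb) (t : Fin n) (σ : Fin t.1 → S)
    (hσ : 0 < codePr M C (fun _ _ s _ _ _ => prefixOf s t = σ))
    (s : S) (sA : Sa) (sB : Sb) (ta : Sa → Xa) (tb : Sb → Xb) :
    codePr M C (fun wa' wb' s' sa' sb' _ =>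
        prefixOf s' t = σ ∧ s' t = s ∧ sa' t = sA ∧ sb' t = sB ∧
          stratA C t wa' sa' = ta ∧ stratB C t wb' sb' = tb) /
      codePr M C (fun _ _ s' _ _ _ => prefixOf s' t = σ) =
      (M.PS s * M.Qa s sA * M.Qb s sB) * piA M C t σ ta * piB M C t σ tb := by
  classical
  have hD := CF_D M C t σ
  have hca : (Fintype.card Wa : ℝ) ≠ 0 := by
    intro h
    rw [hD, h] at hσ
    simp at hσ
  have hcb : (Fintype.card Wb : ℝ) ≠ 0 := by
    intro h
    rw [hD, h] at hσ
    simp at hσ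
  have hDval : codePr M C (fun _ _ s' _ _ _ => prefixOf s' t = σ) = ∏ j, M.PS (σ j) := by
    rw [hD]
    field_simp
  have hP : (0:ℝ) < ∏ j, M.PS (σ j) := hDval ▸ hσ
  have hPne : (∏ j, M.PS (σ j)) ≠ 0 := ne_of_gt hP
  have hpiA : piA M C t σ ta
      = (∑ wa : Wa, ∑ pa : Fin t.1 → Sa,
          (@ite ℝ (encStratA C t pa wa = ta) (Classical.propDecidable _) (1:ℝ) 0)
            * ∏ j, M.Qa (σ j) (pa j)) / (Fintype.card Wa : ℝ) := by
    unfold piA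
    have hterm : ∀ σa : Fin t.1 → Sa,
        (codePr M C (fun _ _ s' sa _ _ => prefixOf s' t = σ ∧ prefixOf sa t = σa) /
            codePr M C (fun _ _ s' _ _ _ => prefixOf s' t = σ)) *
          ((((Finset.univ.filter fun wa : Wa => encStratA C t σa wa = ta).card : ℝ)) /
            (Fintype.card Wa : ℝ))
        = (∏ j, M.Qa (σ j) (σa j)) *
            ((((Finset.univ.filter fun wa : Wa => encStratA C t σa wa = ta).card : ℝ)) /
              (Fintype.card Wa : ℝ)) := by
      intro σa
      rw [CF_A M C t σ σa, hDval]
      congr 1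
      field_simp
    refine Eq.trans (Finset.sum_congr rfl fun σa _ => hterm σa) ?_
    have hswap : (∑ wa : Wa, ∑ pa : Fin t.1 → Sa,
          (@ite ℝ (encStratA C t pa wa = ta) (Classical.propDecidable _) (1:ℝ) 0)
            * ∏ j, M.Qa (σ j) (pa j))
        = ∑ pa : Fin t.1 → Sa,
            (((Finset.univ.filter fun wa : Wa => encStratA C t pa wa = ta).card : ℝ))
              * ∏ j, M.Qa (σ j) (pa j) := by
      rw [Finset.sum_comm]
      refine Finset.sum_congr rfl fun pa _ => ?_
      rw [← Finset.sum_mul]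
      congr 1
      convert Finset.sum_boole _ Finset.univ using 2
      congr!
    rw [hswap, Finset.sum_div]
    exact Finset.sum_congr rfl fun σa _ => by ring
  have hpiB : piB M C t σ tb
      = (∑ wb : Wb, ∑ pb : Fin t.1 → Sb,
          (@ite ℝ (encStratB C t pb wb = tb) (Classical.propDecidable _) (1:ℝ) 0)
            * ∏ j, M.Qb (σ j) (pb j)) / (Fintype.card Wb : ℝ) := by
    unfold piB
    have hterm : ∀ σb : Fin t.1 → Sb,
        (codePr M C (fun _ _ s' _ sb _ => prefixOf s' t = σ ∧ prefixOf sb t = σb) /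
            codePr M C (fun _ _ s' _ _ _ => prefixOf s' t = σ)) *
          ((((Finset.univ.filter fun wb : Wb => encStratB C t σb wb = tb).card : ℝ)) /
            (Fintype.card Wb : ℝ))
        = (∏ j, M.Qb (σ j) (σb j)) *
            ((((Finset.univ.filter fun wb : Wb => encStratB C t σb wb = tb).card : ℝ)) /
              (Fintype.card Wb : ℝ)) := by
      intro σb
      rw [CF_B M C t σ σb, hDval]
      congr 1
      field_simp
    refine Eq.trans (Finset.sum_congr rfl fun σb _ => hterm σb) ?_
    have hswap : (∑ wb : Wb, ∑ pb : Fin t.1 → Sb,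
          (@ite ℝ (encStratB C t pb wb = tb) (Classical.propDecidable _) (1:ℝ) 0)
            * ∏ j, M.Qb (σ j) (pb j))
        = ∑ pb : Fin t.1 → Sb,
            (((Finset.univ.filter fun wb : Wb => encStratB C t pb wb = tb).card : ℝ))
              * ∏ j, M.Qb (σ j) (pb j) := by
      rw [Finset.sum_comm]
      refine Finset.sum_congr rfl fun pb _ => ?_
      rw [← Finset.sum_mul]
      congr 1
      convert Finset.sum_boole _ Finset.univ using 2
      congr!
    rw [hswap, Finset.sum_div]
    exact Finset.sum_congr rfl fun σb _ => by ring
  rw [CF_N M C t σ s sA sB ta tb, hDval, hpiA, hpiB]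
  rw [show gTrip M (s, sA, sB) = M.PS s * M.Qa s sA * M.Qb s sB from rfl]
  field_simp
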